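/- Let α ∈ [0,1), P = αS + (1−α)ez with S stochastic and z a positive probability vector, π(P) its invariant measure. For the total income utility U(P) = ∑_{i,j} π_i(P) P_{i,j} r_{i,j}, the directional derivative of U at P in a direction Q (a matrix with zero row sums, tangent to the stochastic matrices) equals ∑_{i,j} (v_j(P) + r_{i,j}) π_i(P) Q_{i,j}, where v(P) = (I_n − P + (1−α)ez)^{-1} r̄ and r̄_i = ∑_j P_{i,j} r_{i,j}. -/

import Mathlib

open BigOperators Matrix

/-- A row-stochastic matrix. -/
def IsStochasticMat {n : ℕ} (P : Matrix (Fin n) (Fin n) ℝ) : Prop :=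
  (∀ i j, 0 ≤ P i j) ∧ (∀ i, ∑ j, P i j = 1)

theorem stmt16 (n : ℕ) (α : ℝ) (hα0 : 0 ≤ α) (hα1 : α < 1)
    (z : Fin n → ℝ) (hz0 : ∀ j, 0 < z j) (hz1 : ∑ j, z j = 1)
    (r : Fin n → Fin n → ℝ)
    (S : Matrix (Fin n) (Fin n) ℝ) (hS : IsStochasticMat S)
    (P : Matrix (Fin n) (Fin n) ℝ)
    (hP : P = α • S + (1 - α) • Matrix.of fun _ j => z j)
    -- explicit formula for the invariant measure, extended to matrices near P
    (pf : Matrix (Fin n) (Fin n) ℝ → Fin n → ℝ)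
    (hpf : ∀ A, pf A = (1 - α) • (z ᵥ* (1 - A + (1 - α) • Matrix.of fun _ j => z j)⁻¹))
    (U : Matrix (Fin n) (Fin n) ℝ → ℝ)
    (hU : ∀ A, U A = ∑ i, ∑ j, pf A i * A i j * r i j)
    -- a tangent direction: each row of Q sums to zero
    (Q : Matrix (Fin n) (Fin n) ℝ) (hQ : ∀ i, ∑ j, Q i j = 0)
    (rbar : Fin n → ℝ) (hrbar : ∀ i, rbar i = ∑ j, P i j * r i j)
    (v : Fin n → ℝ)
    (hv : (1 - P + (1 - α) • Matrix.of fun _ j => z j) *ᵥ v = rbar) :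
    HasDerivAt (fun t : ℝ => U (P + t • Q))
      (∑ i, ∑ j, (v j + r i j) * pf P i * Q i j) 0 := by
  classical
  letI : SeminormedRing (Matrix (Fin n) (Fin n) ℝ) := Matrix.linftyOpSemiNormedRing
  letI : NormedRing (Matrix (Fin n) (Fin n) ℝ) := Matrix.linftyOpNormedRing
  letI : NormedAlgebra ℝ (Matrix (Fin n) (Fin n) ℝ) := Matrix.linftyOpNormedAlgebra
  set E : Matrix (Fin n) (Fin n) ℝ := Matrix.of fun _ j => z j with hE
  set M : Matrix (Fin n) (Fin n) ℝ := 1 - P + (1 - α) • E with hMdef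
  -- M is a unit
  have hM : M = 1 - α • S := by rw [hMdef, hP]; abel
  have hSle : ‖S‖ ≤ 1 := by
    rw [Matrix.linfty_opNorm_def]
    have : (Finset.univ.sup fun i : Fin n => ∑ j, ‖S i j‖₊) ≤ 1 := by
      apply Finset.sup_le
      intro i _
      rw [← NNReal.coe_le_coe]
      push_cast
      calc (∑ j, ‖S i j‖) = ∑ j, S i j := by
            refine Finset.sum_congr rfl fun j _ => ?_
            rw [Real.norm_eq_abs, abs_of_nonneg (hS.1 i j)]
        _ = 1 := hS.2 i
        _ ≤ 1 := le_refl 1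
    exact_mod_cast this
  have hSnorm : ‖α • S‖ < 1 := by
    rw [norm_smul, Real.norm_eq_abs, abs_of_nonneg hα0]
    calc α * ‖S‖ ≤ α * 1 := by nlinarith [norm_nonneg S]
      _ < 1 := by linarith
  have hMunit : IsUnit M := by
    rw [hM]; exact (Units.oneSub (α • S) hSnorm).isUnit
  set W : Matrix (Fin n) (Fin n) ℝ := M⁻¹ * Q * M⁻¹ with hW
  -- derivative of entries of the inverse
  have he : ∀ k i : Fin n,
      HasDerivAt (fun t : ℝ => (Ring.inverse (M - t • Q)) k i) (W k i) 0 := by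
    intro k i
    obtain ⟨u, hu⟩ := hMunit
    have huinv : (↑u⁻¹ : Matrix (Fin n) (Fin n) ℝ) = M⁻¹ := by
      rw [Matrix.nonsing_inv_eq_ringInverse, ← hu, Ring.inverse_unit]
    have hψ : HasDerivAt (fun t : ℝ => M - t • Q) (-Q) 0 := by
      have := ((hasDerivAt_id (0:ℝ)).smul_const Q).const_sub M
      simp at this; exact this
    have hφ : HasFDerivAt Ring.inverse
        (-ContinuousLinearMap.mulLeftRight ℝ (Matrix (Fin n) (Fin n) ℝ) ↑u⁻¹ ↑u⁻¹) M := by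
      rw [← hu]; exact hasFDerivAt_ringInverse u
    have hg : HasDerivAt (fun t : ℝ => Ring.inverse (M - t • Q)) W 0 := by
      have hφ' : HasFDerivAt Ring.inverse
          (-ContinuousLinearMap.mulLeftRight ℝ (Matrix (Fin n) (Fin n) ℝ) ↑u⁻¹ ↑u⁻¹)
          ((fun t : ℝ => M - t • Q) 0) := by simpa using hφ
      have := hφ'.comp_hasDerivAt 0 hψ
      simp [hW, huinv, ContinuousLinearMap.mulLeftRight_apply, mul_assoc] at this; rw [hW, mul_assoc]; exact this
    let L : Matrix (Fin n) (Fin n) ℝ →L[ℝ] ℝ :=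
      LinearMap.toContinuousLinearMap (Matrix.entryLinearMap ℝ ℝ k i)
    have := L.hasFDerivAt.comp_hasDerivAt 0 hg
    exact this
  -- rewrite U (P + t • Q) explicitly
  have hkey : ∀ t : ℝ, U (P + t • Q) =
      ∑ i, ∑ j, ((1 - α) * ∑ k, z k * (Ring.inverse (M - t • Q)) k i)
        * (P i j + t * Q i j) * r i j := by
    intro t
    have h1 : 1 - (P + t • Q) + (1 - α) • E = M - t • Q := by rw [hMdef]; abel
    rw [hU, ]
    refine Finset.sum_congr rfl fun i _ => Finset.sum_congr rfl fun j _ => ?_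
    have h2 : pf (P + t • Q) i
        = (1 - α) * ∑ k, z k * (Ring.inverse (M - t • Q)) k i := by
      rw [hpf]
      simp only [← hE, h1, Matrix.nonsing_inv_eq_ringInverse, Pi.smul_apply, smul_eq_mul,
        Matrix.vecMul, dotProduct]
    rw [h2]
    simp [Matrix.add_apply, Matrix.smul_apply, smul_eq_mul]
  -- the inverse at t = 0
  have hg0 : Ring.inverse (M - (0:ℝ) • Q) = M⁻¹ := by
    rw [zero_smul, sub_zero, Matrix.nonsing_inv_eq_ringInverse]
  -- pf P in explicit form
  have hpfP : ∀ i, pf P i = (1 - α) * ∑ k, z k * M⁻¹ k i := by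
    intro i
    rw [hpf]
    simp only [← hE, ← hMdef, Pi.smul_apply, smul_eq_mul, Matrix.vecMul, dotProduct]
  obtain ⟨s, hs⟩ : ∃ s : Fin n → ℝ, s = fun i => ∑ k, z k * W k i := ⟨_, rfl⟩
  -- differentiate
  have hder : HasDerivAt (fun t : ℝ => ∑ i, ∑ j,
      ((1 - α) * ∑ k, z k * (Ring.inverse (M - t • Q)) k i) * (P i j + t * Q i j) * r i j)
      (∑ i, ∑ j, ((1 - α) * s i * P i j + pf P i * Q i j) * r i j) 0 := by
    apply HasDerivAt.fun_sum; intro i _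
    apply HasDerivAt.fun_sum; intro j _
    have hsum : HasDerivAt (fun t : ℝ => ∑ k, z k * (Ring.inverse (M - t • Q)) k i)
        (s i) 0 := by
      simp only [hs]
      apply HasDerivAt.fun_sum; intro k _
      exact (he k i).const_mul (z k)
    have h1 : HasDerivAt (fun t : ℝ => (1 - α) * ∑ k, z k * (Ring.inverse (M - t • Q)) k i)
        ((1 - α) * s i) 0 := hsum.const_mul (1 - α)
    have h2 : HasDerivAt (fun t : ℝ => P i j + t * Q i j) (Q i j) 0 := by
      simpa using ((hasDerivAt_id (0:ℝ)).mul_const (Q i j)).const_add (P i j)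
    have := (h1.mul h2).mul_const (r i j)
    refine this.congr_deriv ?_
    rw [hg0, hpfP]
    ring
  -- identify the derivative value
  have hMinvv : M⁻¹ *ᵥ rbar = v := by
    have hdet : IsUnit M.det := (Matrix.isUnit_iff_isUnit_det M).mp hMunit
    rw [← hv, Matrix.mulVec_mulVec, Matrix.nonsing_inv_mul M hdet, Matrix.one_mulVec]
  have hpfP' : ∀ i, pf P i = (1 - α) * (z ᵥ* M⁻¹) i := by
    intro i
    rw [hpfP]
    rfl
  have hstar : (1 - α) * ∑ i, s i * rbar i = ∑ i, ∑ j, pf P i * Q i j * v j := by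
    have e2 : z ᵥ* W = ((z ᵥ* M⁻¹) ᵥ* Q) ᵥ* M⁻¹ := by
      rw [hW, ← Matrix.vecMul_vecMul, ← Matrix.vecMul_vecMul]
    calc (1 - α) * ∑ i, s i * rbar i
        = (1 - α) * ((z ᵥ* W) ⬝ᵥ rbar) := by
          simp only [hs]
          rfl
      _ = (1 - α) * (((z ᵥ* M⁻¹) ᵥ* Q) ⬝ᵥ (M⁻¹ *ᵥ rbar)) := by
          rw [e2, Matrix.dotProduct_mulVec]
      _ = (1 - α) * (((z ᵥ* M⁻¹) ᵥ* Q) ⬝ᵥ v) := by rw [hMinvv]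
      _ = (1 - α) * ∑ j, (∑ i, (z ᵥ* M⁻¹) i * Q i j) * v j := rfl
      _ = ∑ j, ∑ i, pf P i * Q i j * v j := by
          rw [Finset.mul_sum]
          refine Finset.sum_congr rfl fun j _ => ?_
          rw [Finset.sum_mul, Finset.mul_sum]
          refine Finset.sum_congr rfl fun i _ => ?_
          rw [hpfP' i]
          ring
      _ = ∑ i, ∑ j, pf P i * Q i j * v j := Finset.sum_comm
  have hval : (∑ i, ∑ j, ((1 - α) * s i * P i j + pf P i * Q i j) * r i j)
      = ∑ i, ∑ j, (v j + r i j) * pf P i * Q i j := by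
    have hrow : ∀ i, ∑ j, ((1 - α) * s i * P i j + pf P i * Q i j) * r i j
        = (1 - α) * (s i * rbar i) + ∑ j, pf P i * Q i j * r i j := by
      intro i
      rw [hrbar i, Finset.mul_sum, Finset.mul_sum, ← Finset.sum_add_distrib]
      exact Finset.sum_congr rfl fun j _ => by ring
    calc (∑ i, ∑ j, ((1 - α) * s i * P i j + pf P i * Q i j) * r i j)
        = (1 - α) * (∑ i, s i * rbar i) + ∑ i, ∑ j, pf P i * Q i j * r i j := by
          rw [Finset.mul_sum, ← Finset.sum_add_distrib]
          exact Finset.sum_congr rfl fun i _ => hrow i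
      _ = (∑ i, ∑ j, pf P i * Q i j * v j) + ∑ i, ∑ j, pf P i * Q i j * r i j := by
          rw [hstar]
      _ = ∑ i, ∑ j, (v j + r i j) * pf P i * Q i j := by
          rw [← Finset.sum_add_distrib]
          refine Finset.sum_congr rfl fun i _ => ?_
          rw [← Finset.sum_add_distrib]
          exact Finset.sum_congr rfl fun j _ => by ring
  have hfun : (fun t : ℝ => U (P + t • Q)) = fun t : ℝ => ∑ i, ∑ j,
      ((1 - α) * ∑ k, z k * (Ring.inverse (M - t • Q)) k i) * (P i j + t * Q i j) * r i j :=
    funext hkey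
  rw [hfun, ← hval]
  exact hder
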